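/- Let P be an L-convex polyomino and P* the Ferrer diagram obtained by sorting the row lengths and column lengths of P in weakly decreasing order. Then for every k, the number of placements of k non-attacking rooks on P equals the number on P*; in particular the maximal numbers of non-attacking rooks on P and on P* coincide. -/

import Mathlib

/-- Two cells of `ℤ × ℤ` are adjacent if they share an edge. -/
def CellAdj (a b : ℤ × ℤ) : Prop :=
  (a.1 = b.1 ∧ (a.2 = b.2 + 1 ∨ b.2 = a.2 + 1)) ∨
  (a.2 = b.2 ∧ (a.1 = b.1 + 1 ∨ b.1 = a.1 + 1))

/-- `P` is an L-convex polyomino: it is row convex, column convex, and any two of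
its cells are joined by a path of distinct cells of `P` with at most one change of
direction. Cells are recorded as `(row, column)`. -/
def IsLConvex (P : Finset (ℤ × ℤ)) : Prop :=
  (∀ i j j' j'' : ℤ, (i, j) ∈ P → (i, j'') ∈ P → j ≤ j' → j' ≤ j'' → (i, j') ∈ P) ∧
  (∀ i i' i'' j : ℤ, (i, j) ∈ P → (i'', j) ∈ P → i ≤ i' → i' ≤ i'' → (i', j) ∈ P) ∧
  (∀ a ∈ P, ∀ b ∈ P, ∃ (k : ℕ) (c : ℕ → ℤ × ℤ),
    c 0 = a ∧ c k = b ∧ (∀ i ≤ k, c i ∈ P) ∧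
    (∀ i < k, CellAdj (c i) (c (i + 1))) ∧
    (∀ i j, i ≤ k → j ≤ k → c i = c j → i = j) ∧
    ((Finset.Ioo 0 k).filter (fun i =>
      (c (i - 1)).1 ≠ (c (i + 1)).1 ∧ (c (i - 1)).2 ≠ (c (i + 1)).2)).card ≤ 1)

/-- Number of cells of `P` in row `i`. -/
def rowCount (P : Finset (ℤ × ℤ)) (i : ℤ) : ℕ := (P.filter (fun c => c.1 = i)).card

/-- Number of cells of `P` in column `j`. -/
def colCount (P : Finset (ℤ × ℤ)) (j : ℤ) : ℕ := (P.filter (fun c => c.2 = j)).card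

/-- The multiset of row lengths of `P` (one entry per occupied row). -/
def rowMultiset (P : Finset (ℤ × ℤ)) : Multiset ℕ :=
  (P.image Prod.fst).val.map (rowCount P)

/-- The multiset of column lengths of `P` (one entry per occupied column). -/
def colMultiset (P : Finset (ℤ × ℤ)) : Multiset ℕ :=
  (P.image Prod.snd).val.map (colCount P)

/-- The Ferrer diagram (as a set of cells in `ℤ × ℤ`) with `n` left-justified
rows, row `i` (0-based) having `h i` cells. -/
def ferrerCellsZ (n : ℕ) (h : ℕ → ℕ) : Finset (ℤ × ℤ) :=
  (Finset.range n).biUnion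
    (fun i => (Finset.range (h i)).image (fun (j : ℕ) => ((i : ℤ), (j : ℤ))))

/-- Placements of `k` non-attacking rooks on the cell set `P`. -/
def rookPlacements {α β : Type*} [DecidableEq α] [DecidableEq β]
    (P : Finset (α × β)) (r : ℕ) : Finset (Finset (α × β)) :=
  P.powerset.filter (fun R => R.card = r ∧
    ∀ a ∈ R, ∀ b ∈ R, a ≠ b → a.1 ≠ b.1 ∧ a.2 ≠ b.2)

def rowSet (B : Finset (ℤ × ℤ)) (i : ℤ) : Finset ℤ :=
  (B.filter (fun c => c.1 = i)).image Prod.snd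

lemma mem_rowSet {B : Finset (ℤ × ℤ)} {i j : ℤ} : j ∈ rowSet B i ↔ (i, j) ∈ B := by
  simp only [rowSet, Finset.mem_image, Finset.mem_filter]
  constructor
  · rintro ⟨⟨x, y⟩, ⟨hB, hx⟩, hy⟩
    simp only at hx hy
    subst hx; subst hy; exact hB
  · intro hb; exact ⟨(i, j), ⟨hb, rfl⟩, rfl⟩

lemma rowCount_eq (B : Finset (ℤ × ℤ)) (i : ℤ) : rowCount B i = (rowSet B i).card := by
  refine (Finset.card_image_of_injOn ?_).symm
  intro a ha b hb hab
  rcases Finset.mem_filter.mp ha with ⟨-, ha1⟩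
  rcases Finset.mem_filter.mp hb with ⟨-, hb1⟩
  exact Prod.ext (ha1.trans hb1.symm) hab

def Crossing (B : Finset (ℤ × ℤ)) : Prop :=
  ∀ a ∈ B, ∀ b ∈ B, (a.1, b.2) ∈ B ∨ (b.1, a.2) ∈ B

def NestedR (B : Finset (ℤ × ℤ)) : Prop :=
  ∀ i i' : ℤ, rowSet B i ⊆ rowSet B i' ∨ rowSet B i' ⊆ rowSet B i

lemma nested_of_crossing {B : Finset (ℤ × ℤ)} (hC : Crossing B) : NestedR B := by
  intro i i'
  by_cases hss : rowSet B i ⊆ rowSet B i'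
  · exact Or.inl hss
  · right
    obtain ⟨j, hj, hj'⟩ := Finset.not_subset.mp hss
    intro j' hj''
    rcases hC (i, j) (mem_rowSet.mp hj) (i', j') (mem_rowSet.mp hj'') with hc | hc
    · exact mem_rowSet.mpr hc
    · exact absurd (mem_rowSet.mpr hc) hj'

lemma rook_zero {α β : Type*} [DecidableEq α] [DecidableEq β] (B : Finset (α × β)) :
    rookPlacements B 0 = {∅} := by
  ext R
  simp only [rookPlacements, Finset.mem_filter, Finset.mem_powerset, Finset.card_eq_zero,
    Finset.mem_singleton]
  constructor
  · rintro ⟨-, h, -⟩; exact h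
  · rintro rfl; simp

lemma mem_ferrer {n : ℕ} {h : ℕ → ℕ} {x y : ℤ} :
    (x, y) ∈ ferrerCellsZ n h ↔ ∃ i : ℕ, i < n ∧ x = i ∧ ∃ j : ℕ, j < h i ∧ y = j := by
  simp only [ferrerCellsZ, Finset.mem_biUnion, Finset.mem_image, Finset.mem_range,
    Prod.mk.injEq]
  constructor
  · rintro ⟨i, hi, j, hj, hx, hy⟩; exact ⟨i, hi, hx.symm, j, hj, hy.symm⟩
  · rintro ⟨i, hi, hx, j, hj, hy⟩; exact ⟨i, hi, j, hj, hx.symm, hy.symm⟩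

lemma crossing_ferrer {n : ℕ} {h : ℕ → ℕ} (hdec : ∀ i j : ℕ, i ≤ j → j < n → h j ≤ h i) :
    Crossing (ferrerCellsZ n h) := by
  rintro ⟨x, y⟩ ha ⟨x', y'⟩ hb
  obtain ⟨i, hi, rfl, j, hj, rfl⟩ := mem_ferrer.mp ha
  obtain ⟨i', hi', rfl, j', hj', rfl⟩ := mem_ferrer.mp hb
  rcases le_total i i' with hle | hle
  · left
    exact mem_ferrer.mpr ⟨i, hi, rfl, j', lt_of_lt_of_le hj' (hdec i i' hle hi'), rfl⟩
  · right
    exact mem_ferrer.mpr ⟨i', hi', rfl, j, lt_of_lt_of_le hj (hdec i' i hle hi), rfl⟩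

lemma rec_count (B : Finset (ℤ × ℤ)) (i : ℤ)
    (hmax : ∀ j ∈ B.image Prod.fst, rowSet B j ⊆ rowSet B i) (k : ℕ) :
    (rookPlacements B (k + 1)).card
      = (rookPlacements (B.filter (fun c => c.1 ≠ i)) (k + 1)).card
        + ((rowSet B i).card - k) * (rookPlacements (B.filter (fun c => c.1 ≠ i)) k).card := by
  classical
  set B₀ := B.filter (fun c => c.1 ≠ i) with hB₀
  have hB₀sub : B₀ ⊆ B := Finset.filter_subset _ _
  -- part 1 : placements avoiding row i
  have h1 : (rookPlacements B (k+1)).filter (fun R => ∀ c ∈ R, c.1 ≠ i)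
      = rookPlacements B₀ (k+1) := by
    ext R
    simp only [rookPlacements, Finset.mem_filter, Finset.mem_powerset, hB₀,
      Finset.subset_iff, Finset.mem_filter]
    constructor
    · rintro ⟨⟨hsub, hcard, hna⟩, hno⟩
      exact ⟨fun x hx => ⟨hsub hx, hno x hx⟩, hcard, hna⟩
    · rintro ⟨hsub, hcard, hna⟩
      exact ⟨⟨fun x hx => (hsub hx).1, hcard, hna⟩, fun x hx => (hsub hx).2⟩
  -- part 2 : placements using row i
  have h2 : (rookPlacements B (k+1)).filter (fun R => ¬ ∀ c ∈ R, c.1 ≠ i)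
      = (rookPlacements B₀ k).biUnion
          (fun S => (rowSet B i \ S.image Prod.snd).image (fun j => insert (i, j) S)) := by
    ext R
    simp only [Finset.mem_filter, Finset.mem_biUnion, Finset.mem_image, Finset.mem_sdiff]
    constructor
    · rintro ⟨hR, hex⟩
      push_neg at hex
      obtain ⟨x, hxR, hxi⟩ := hex
      obtain ⟨hRsub, hRcard, hRna⟩ : R ⊆ B ∧ R.card = k + 1 ∧
          ∀ a ∈ R, ∀ b ∈ R, a ≠ b → a.1 ≠ b.1 ∧ a.2 ≠ b.2 := by
        simpa [rookPlacements, Finset.mem_filter, Finset.mem_powerset, and_assoc] using hR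
      set S := R.erase x with hS
      have hScard : S.card = k := by rw [hS, Finset.card_erase_of_mem hxR, hRcard]; rfl
      have hSsub : S ⊆ B₀ := by
        intro y hy
        have hyR : y ∈ R := Finset.mem_of_mem_erase hy
        have hyx : y ≠ x := Finset.ne_of_mem_erase hy
        refine Finset.mem_filter.mpr ⟨hRsub hyR, ?_⟩
        have := (hRna y hyR x hxR hyx).1
        rw [hxi] at this; exact this
      have hSmem : S ∈ rookPlacements B₀ k := by
        refine Finset.mem_filter.mpr ⟨Finset.mem_powerset.mpr hSsub, hScard, ?_⟩
        intro p hp q hq hpq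
        exact hRna p (Finset.mem_of_mem_erase hp) q (Finset.mem_of_mem_erase hq) hpq
      refine ⟨S, hSmem, x.2, ⟨?_, ?_⟩, ?_⟩
      · apply mem_rowSet.mpr
        have : (i, x.2) = x := by
          apply Prod.ext
          · exact hxi.symm
          · rfl
        rw [this]; exact hRsub hxR
      · rintro ⟨y, hyS, hyx⟩
        have hyR : y ∈ R := Finset.mem_of_mem_erase hyS
        have hyne : y ≠ x := Finset.ne_of_mem_erase hyS
        exact (hRna y hyR x hxR hyne).2 hyx
      · have : (i, x.2) = x := by
          apply Prod.ext
          · exact hxi.symm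
          · rfl
        rw [this, hS, Finset.insert_erase hxR]
    · rintro ⟨S, hSmem, j, ⟨hjrow, hjim⟩, rfl⟩
      obtain ⟨hSsub, hScard, hSna⟩ : S ⊆ B₀ ∧ S.card = k ∧
          ∀ a ∈ S, ∀ b ∈ S, a ≠ b → a.1 ≠ b.1 ∧ a.2 ≠ b.2 := by
        simpa [rookPlacements, Finset.mem_filter, Finset.mem_powerset, and_assoc] using hSmem
      have hrows : ∀ y ∈ S, y.1 ≠ i := fun y hy => (Finset.mem_filter.mp (hSsub hy)).2
      have hijS : (i, j) ∉ S := fun hmem => (hrows _ hmem) rfl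
      constructor
      · refine Finset.mem_filter.mpr ⟨Finset.mem_powerset.mpr ?_, ?_, ?_⟩
        · refine Finset.insert_subset (mem_rowSet.mp hjrow) (hSsub.trans hB₀sub)
        · rw [Finset.card_insert_of_notMem hijS, hScard]
        · intro p hp q hq hpq
          rcases Finset.mem_insert.mp hp with rfl | hp'
          · rcases Finset.mem_insert.mp hq with rfl | hq'
            · exact absurd rfl hpq
            · constructor
              · exact fun hh => hrows q hq' hh.symm
              · exact fun hh => hjim ⟨q, hq', hh.symm⟩
          · rcases Finset.mem_insert.mp hq with rfl | hq'
            · constructor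
              · exact fun hh => hrows p hp' hh
              · exact fun hh => hjim ⟨p, hp', hh⟩
            · exact hSna p hp' q hq' hpq
      · push_neg
        exact ⟨(i, j), Finset.mem_insert_self _ _, rfl⟩
  -- filter helper : recover S from insert (i,j) S
  have hrecover : ∀ S ∈ rookPlacements B₀ k, ∀ j,
      (insert ((i : ℤ), j) S).filter (fun c => c.1 ≠ i) = S := by
    intro S hSmem j
    obtain ⟨hSsub, -⟩ := Finset.mem_filter.mp hSmem
    have hso : S ⊆ B₀ := Finset.mem_powerset.mp hSsub
    rw [Finset.filter_insert, if_neg (by simp)]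
    apply Finset.filter_true_of_mem
    intro y hy
    exact (Finset.mem_filter.mp (hso hy)).2
  -- cardinality of the biUnion
  have h3 : ((rookPlacements B₀ k).biUnion
      (fun S => (rowSet B i \ S.image Prod.snd).image (fun j => insert (i, j) S))).card
      = ((rowSet B i).card - k) * (rookPlacements B₀ k).card := by
    rw [Finset.card_biUnion]
    · have hconst : ∀ S ∈ rookPlacements B₀ k,
          ((rowSet B i \ S.image Prod.snd).image (fun j => insert (i, j) S)).card
            = (rowSet B i).card - k := by
        intro S hSmem
        obtain ⟨hSsub, hScard, hSna⟩ : S ⊆ B₀ ∧ S.card = k ∧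
            ∀ a ∈ S, ∀ b ∈ S, a ≠ b → a.1 ≠ b.1 ∧ a.2 ≠ b.2 := by
          simpa [rookPlacements, Finset.mem_filter, Finset.mem_powerset, and_assoc] using hSmem
        have hrows : ∀ y ∈ S, y.1 ≠ i := fun y hy => (Finset.mem_filter.mp (hSsub hy)).2
        rw [Finset.card_image_of_injOn]
        · have himsub : S.image Prod.snd ⊆ rowSet B i := by
            intro y hy
            obtain ⟨p, hp, rfl⟩ := Finset.mem_image.mp hy
            have hpB : p ∈ B := hB₀sub (hSsub hp)
            have : p.2 ∈ rowSet B p.1 := mem_rowSet.mpr (by simpa using hpB)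
            exact hmax p.1 (Finset.mem_image_of_mem Prod.fst hpB) this
          have himcard : (S.image Prod.snd).card = k := by
            rw [Finset.card_image_of_injOn, hScard]
            intro p hp q hq hpq
            by_contra hne
            exact (hSna p hp q hq hne).2 hpq
          rw [Finset.card_sdiff_of_subset himsub, himcard]
        · intro p hp q hq hpq
          have hpq' : insert ((i:ℤ), p) S = insert ((i:ℤ), q) S := hpq
          have : (i, p) ∈ insert ((i:ℤ), q) S :=
            hpq' ▸ Finset.mem_insert_self ((i:ℤ), p) S
          rcases Finset.mem_insert.mp this with hh | hh
          · exact (Prod.ext_iff.mp hh).2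
          · exact absurd rfl (hrows _ hh)
      rw [Finset.sum_congr rfl hconst, Finset.sum_const, smul_eq_mul, mul_comm]
    · intro S hS S' hS' hne
      rw [Function.onFun, Finset.disjoint_left]
      rintro R hR hR'
      obtain ⟨j, -, rfl⟩ := Finset.mem_image.mp hR
      obtain ⟨j', -, hR'e⟩ := Finset.mem_image.mp hR'
      apply hne
      have e1 := hrecover S hS j
      have e2 := hrecover S' hS' j'
      rw [hR'e] at e2
      rw [← e1, ← e2]
  -- put the pieces together
  have hsplit := Finset.card_filter_add_card_filter_not
    (s := rookPlacements B (k+1)) (p := fun R => ∀ c ∈ R, c.1 ≠ i)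
  rw [h1, h2, h3] at hsplit
  omega

lemma rowSet_filter_ne (B : Finset (ℤ × ℤ)) (i j : ℤ) :
    rowSet (B.filter (fun c => c.1 ≠ i)) j = if j = i then ∅ else rowSet B j := by
  ext y
  rw [mem_rowSet]
  by_cases hj : j = i
  · subst hj; simp [Finset.mem_filter]
  · simp [Finset.mem_filter, mem_rowSet, hj]

lemma image_fst_filter_ne (B : Finset (ℤ × ℤ)) (i : ℤ) :
    (B.filter (fun c => c.1 ≠ i)).image Prod.fst = (B.image Prod.fst).erase i := by
  ext j
  simp only [Finset.mem_image, Finset.mem_filter, Finset.mem_erase]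
  constructor
  · rintro ⟨c, ⟨hc, hci⟩, rfl⟩
    exact ⟨hci, c, hc, rfl⟩
  · rintro ⟨hji, c, hc, rfl⟩
    exact ⟨c, ⟨hc, hji⟩, rfl⟩

lemma rowCount_filter_ne (B : Finset (ℤ × ℤ)) (i j : ℤ) (hj : j ≠ i) :
    rowCount (B.filter (fun c => c.1 ≠ i)) j = rowCount B j := by
  rw [rowCount_eq, rowCount_eq, rowSet_filter_ne, if_neg hj]

lemma rowMultiset_cons (B : Finset (ℤ × ℤ)) (i : ℤ) (hi : i ∈ B.image Prod.fst) :
    rowMultiset B = rowCount B i ::ₘ rowMultiset (B.filter (fun c => c.1 ≠ i)) := by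
  unfold rowMultiset
  rw [image_fst_filter_ne]
  have h1 : (B.image Prod.fst).val = i ::ₘ ((B.image Prod.fst).erase i).val := by
    rw [Finset.erase_val]
    exact (Multiset.cons_erase (Finset.mem_val.mpr hi)).symm
  rw [h1, Multiset.map_cons]
  congr 1
  apply Multiset.map_congr rfl
  intro j hj
  have hji : j ≠ i := (Finset.mem_erase.mp (Finset.mem_val.mp hj)).1
  exact (rowCount_filter_ne B i j hji).symm

lemma empty_case (B' : Finset (ℤ × ℤ))
    (hrm : rowMultiset (∅ : Finset (ℤ × ℤ)) = rowMultiset B') : B' = ∅ := by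
  have h0 : rowMultiset B' = 0 := by
    rw [← hrm]; simp [rowMultiset]
  have h2 : (B'.image Prod.fst).val = 0 := Multiset.map_eq_zero.mp h0
  exact Finset.image_eq_empty.mp (Finset.val_eq_zero.mp h2)

lemma count_eq : ∀ (N : ℕ) (B B' : Finset (ℤ × ℤ)), NestedR B → NestedR B' →
    (B.image Prod.fst).card ≤ N → rowMultiset B = rowMultiset B' →
    ∀ k, (rookPlacements B k).card = (rookPlacements B' k).card := by
  intro N
  induction N with
  | zero =>
    intro B B' _ _ hcard hrm k
    have hB : B = ∅ :=
      Finset.image_eq_empty.mp (Finset.card_eq_zero.mp (Nat.le_zero.mp hcard))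
    subst hB
    rw [empty_case B' hrm]
  | succ N ih =>
    intro B B' hN hN' hcard hrm k
    rcases eq_or_ne B ∅ with rfl | hBne
    · rw [empty_case B' hrm]
    · have hBne' : B.Nonempty := Finset.nonempty_iff_ne_empty.mpr hBne
      have himne : (B.image Prod.fst).Nonempty := hBne'.image _
      obtain ⟨i, hi, hmaxc⟩ := Finset.exists_max_image (B.image Prod.fst) (rowCount B) himne
      have hcards : (B'.image Prod.fst).card = (B.image Prod.fst).card := by
        have hc := congrArg Multiset.card hrm
        simpa [rowMultiset, Finset.card_def, Finset.image_val] using hc.symm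
      have himne' : (B'.image Prod.fst).Nonempty := by
        rw [← Finset.card_pos, hcards, Finset.card_pos]; exact himne
      obtain ⟨i', hi', hmaxc'⟩ := Finset.exists_max_image (B'.image Prod.fst) (rowCount B') himne'
      -- the two maximal row lengths agree
      have h1 : rowCount B i ∈ rowMultiset B' := by
        rw [← hrm]
        exact Multiset.mem_map_of_mem _ (Finset.mem_val.mpr hi)
      obtain ⟨j, hj, hje⟩ := Multiset.mem_map.mp h1
      have le1 : rowCount B i ≤ rowCount B' i' := hje ▸ hmaxc' j (Finset.mem_val.mp hj)
      have h2 : rowCount B' i' ∈ rowMultiset B := by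
        rw [hrm]
        exact Multiset.mem_map_of_mem _ (Finset.mem_val.mpr hi')
      obtain ⟨j', hj', hje'⟩ := Multiset.mem_map.mp h2
      have le2 : rowCount B' i' ≤ rowCount B i := hje' ▸ hmaxc j' (Finset.mem_val.mp hj')
      have hmm : rowCount B' i' = rowCount B i := le_antisymm le2 le1
      -- maximal rows contain every row
      have hsub : ∀ j ∈ B.image Prod.fst, rowSet B j ⊆ rowSet B i := by
        intro j hj
        rcases hN j i with hss | hss
        · exact hss
        · have hcle : (rowSet B j).card ≤ (rowSet B i).card := by
            rw [← rowCount_eq, ← rowCount_eq]; exact hmaxc j hj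
          rw [Finset.eq_of_subset_of_card_le hss hcle]
      have hsub' : ∀ j ∈ B'.image Prod.fst, rowSet B' j ⊆ rowSet B' i' := by
        intro j hj
        rcases hN' j i' with hss | hss
        · exact hss
        · have hcle : (rowSet B' j).card ≤ (rowSet B' i').card := by
            rw [← rowCount_eq, ← rowCount_eq]; exact hmaxc' j hj
          rw [Finset.eq_of_subset_of_card_le hss hcle]
      -- the reduced boards
      have hN₀ : NestedR (B.filter (fun c => c.1 ≠ i)) := by
        intro j j'
        rw [rowSet_filter_ne, rowSet_filter_ne]
        by_cases h1 : j = i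
        · rw [if_pos h1]; exact Or.inl (Finset.empty_subset _)
        · rw [if_neg h1]
          by_cases h2 : j' = i
          · rw [if_pos h2]; exact Or.inr (Finset.empty_subset _)
          · rw [if_neg h2]; exact hN j j'
      have hN₀' : NestedR (B'.filter (fun c => c.1 ≠ i')) := by
        intro j j'
        rw [rowSet_filter_ne, rowSet_filter_ne]
        by_cases h1 : j = i'
        · rw [if_pos h1]; exact Or.inl (Finset.empty_subset _)
        · rw [if_neg h1]
          by_cases h2 : j' = i'
          · rw [if_pos h2]; exact Or.inr (Finset.empty_subset _)
          · rw [if_neg h2]; exact hN' j j'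
      have hrm₀ : rowMultiset (B.filter (fun c => c.1 ≠ i))
          = rowMultiset (B'.filter (fun c => c.1 ≠ i')) := by
        have hcc : rowCount B i ::ₘ rowMultiset (B.filter (fun c => c.1 ≠ i))
            = rowCount B i ::ₘ rowMultiset (B'.filter (fun c => c.1 ≠ i')) := by
          rw [← rowMultiset_cons B i hi, hrm, ← hmm, ← rowMultiset_cons B' i' hi']
        exact (Multiset.cons_inj_right _).mp hcc
      have hcard₀ : ((B.filter (fun c => c.1 ≠ i)).image Prod.fst).card ≤ N := by
        rw [image_fst_filter_ne, Finset.card_erase_of_mem hi]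
        omega
      cases k with
      | zero => rw [rook_zero, rook_zero]
      | succ k =>
        rw [rec_count B i hsub k, rec_count B' i' hsub' k,
          ih _ _ hN₀ hN₀' hcard₀ hrm₀ (k + 1), ih _ _ hN₀ hN₀' hcard₀ hrm₀ k,
          ← rowCount_eq, ← rowCount_eq, hmm]

lemma straight_lemma (P : Finset (ℤ × ℤ)) (k : ℕ) (c : ℕ → ℤ × ℤ)
    (hmem : ∀ i ≤ k, c i ∈ P)
    (hadj : ∀ i < k, CellAdj (c i) (c (i + 1)))
    (hturn : ((Finset.Ioo 0 k).filter (fun i =>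
      (c (i - 1)).1 ≠ (c (i + 1)).1 ∧ (c (i - 1)).2 ≠ (c (i + 1)).2)).card ≤ 1)
    (h0 : 0 < k → (c 0).1 = (c 1).1) :
    ((c 0).1, (c k).2) ∈ P := by
  rcases Nat.eq_zero_or_pos k with rfl | hk
  · simpa using hmem 0 le_rfl
  -- p i : the step at i is "vertical or we are at the end"
  have hex : ∃ t, t = k ∨ (c t).2 = (c (t + 1)).2 := ⟨k, Or.inl rfl⟩
  classical
  set t := Nat.find hex with ht
  have htk : t ≤ k := Nat.find_le (Or.inl rfl)
  -- steps before t are horizontal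
  have hH : ∀ i < t, (c i).1 = (c (i + 1)).1 := by
    intro i hi
    have hnp := Nat.find_min hex hi
    push_neg at hnp
    have hik : i < k := lt_of_le_of_ne (le_trans (le_of_lt hi) htk) hnp.1
    rcases hadj i hik with ⟨he, -⟩ | ⟨he, -⟩
    · exact he
    · exact absurd he hnp.2
  -- rows constant up to t
  have hrow : ∀ i ≤ t, (c i).1 = (c 0).1 := by
    intro i hi
    induction i with
    | zero => rfl
    | succ i ih =>
      have h1 : i < t := hi
      rw [← hH i h1]
      exact ih (le_of_lt h1)
  -- all steps from t on are vertical
  have hV : ∀ i, t ≤ i → i < k → (c i).2 = (c (i + 1)).2 := by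
    by_contra hcon
    push_neg at hcon
    have hex2 : ∃ u, t ≤ u ∧ u < k ∧ (c u).2 ≠ (c (u + 1)).2 := hcon
    set u := Nat.find hex2 with hu
    obtain ⟨hu1, hu2, hu3⟩ := Nat.find_spec hex2
    -- t < k and the step at t is vertical
    have htlt : t < k := lt_of_le_of_lt hu1 hu2
    have hpt : t = k ∨ (c t).2 = (c (t + 1)).2 := Nat.find_spec hex
    have hVt : (c t).2 = (c (t + 1)).2 := hpt.resolve_left (Nat.lt_iff_le_and_ne.mp htlt).2
    have htu : t < u := by
      rcases lt_or_eq_of_le hu1 with h | h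
      · exact h
      · exact absurd hVt (h ▸ hu3)
    -- step u is horizontal
    have hHu : (c u).1 = (c (u + 1)).1 := by
      rcases hadj u hu2 with ⟨he, -⟩ | ⟨he, -⟩
      · exact he
      · exact absurd he hu3
    -- step u-1 is vertical
    have hum : u - 1 < u := Nat.sub_lt (Nat.lt_of_le_of_lt (Nat.zero_le t) htu) one_pos
    have hVum : (c (u - 1)).2 = (c (u - 1 + 1)).2 := by
      have := Nat.find_min hex2 hum
      push_neg at this
      exact this (Nat.le_sub_one_of_lt htu) (lt_trans hum hu2)
    have hue : u - 1 + 1 = u := Nat.succ_pred_eq_of_pos (Nat.lt_of_le_of_lt (Nat.zero_le t) htu)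
    -- turn at u
    have hturn_u : u ∈ (Finset.Ioo 0 k).filter (fun i =>
        (c (i - 1)).1 ≠ (c (i + 1)).1 ∧ (c (i - 1)).2 ≠ (c (i + 1)).2) := by
      refine Finset.mem_filter.mpr ⟨Finset.mem_Ioo.mpr ⟨Nat.lt_of_le_of_lt (Nat.zero_le t) htu, hu2⟩, ?_, ?_⟩
      · -- rows: c(u-1).1 ≠ c(u+1).1
        have hrownum : (c (u - 1)).1 ≠ (c u).1 := by
          have hadjum : CellAdj (c (u - 1)) (c (u - 1 + 1)) :=
            hadj (u - 1) (lt_trans hum hu2)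
          rw [hue] at hadjum hVum
          rcases hadjum with ⟨-, hc2⟩ | ⟨-, hc2⟩
          · exact absurd hVum (by omega)
          · omega
        rw [← hHu]; exact hrownum
      · -- cols: c(u-1).2 = c(u).2 ≠ c(u+1).2
        rw [hue] at hVum
        rw [hVum]
        have hadju := hadj u hu2
        rcases hadju with ⟨-, hc2⟩ | ⟨he, -⟩
        · omega
        · exact absurd he hu3
    -- turn at t : first, t ≥ 1 since step 0 is horizontal (not p 0)
    have hnp0 : ¬ (0 = k ∨ (c 0).2 = (c (0 + 1)).2) := by
      push_neg
      refine ⟨by omega, ?_⟩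
      have hh0 := h0 hk
      rcases hadj 0 hk with ⟨he, hc2⟩ | ⟨he, hc2⟩ <;> norm_num at he hc2 ⊢ <;> omega
    have ht1 : 0 < t := by
      rcases Nat.eq_zero_or_pos t with h | h
      · exact absurd (h ▸ Nat.find_spec hex) hnp0
      · exact h
    have hte : t - 1 + 1 = t := Nat.succ_pred_eq_of_pos ht1
    have hturn_t : t ∈ (Finset.Ioo 0 k).filter (fun i =>
        (c (i - 1)).1 ≠ (c (i + 1)).1 ∧ (c (i - 1)).2 ≠ (c (i + 1)).2) := by
      refine Finset.mem_filter.mpr ⟨Finset.mem_Ioo.mpr ⟨ht1, htlt⟩, ?_, ?_⟩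
      · -- rows: c(t-1).1 = c(t).1 ≠ c(t+1).1
        have h1 : (c (t - 1)).1 = (c t).1 := by
          have := hH (t - 1) (by omega)
          rwa [hte] at this
        rw [h1]
        rcases hadj t htlt with ⟨-, hc2⟩ | ⟨-, hc2⟩
        · exact absurd hVt (by omega)
        · omega
      · -- cols: c(t-1).2 ≠ c(t).2 = c(t+1).2
        have h2 : (c (t - 1)).2 ≠ (c t).2 := by
          have hadjt : CellAdj (c (t - 1)) (c (t - 1 + 1)) := hadj (t - 1) (by omega)
          rw [hte] at hadjt
          rcases hadjt with ⟨-, hc2⟩ | ⟨he, -⟩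
          · omega
          · have := hH (t - 1) (by omega)
            rw [hte] at this
            rcases hadj (t-1) (by omega) with ⟨-, hc2'⟩ | ⟨-, hc2'⟩ <;> rw [hte] at hc2' <;> omega
        rw [← hVt]; exact h2
    have := Finset.card_le_one.mp hturn t hturn_t u hturn_u
    omega
  -- columns constant from t to k
  have hcol : ∀ i, t ≤ i → i ≤ k → (c i).2 = (c t).2 := by
    intro i hti hik
    induction i with
    | zero =>
      have : t = 0 := Nat.le_zero.mp hti
      rw [this]
    | succ i ih =>
      rcases Nat.lt_or_ge t (i + 1) with hlt | hge
      · have hti' : t ≤ i := by omega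
        rw [← hV i hti' (by omega)]
        exact ih hti' (by omega)
      · have : t = i + 1 := le_antisymm hti hge
        rw [this]
  have h1 : (c t).1 = (c 0).1 := hrow t le_rfl
  have h2 : (c k).2 = (c t).2 := hcol k htk le_rfl
  have : ((c 0).1, (c k).2) = c t := by
    rw [← h1, h2]
  rw [this]
  exact hmem t htk

lemma crossing_of_LConvex (P : Finset (ℤ × ℤ)) (hP : IsLConvex P) :
    ∀ a ∈ P, ∀ b ∈ P, (a.1, b.2) ∈ P ∨ (b.1, a.2) ∈ P := by
  intro a ha b hb
  obtain ⟨k, c, hc0, hck, hmem, hadj, _hinj, hturn⟩ := hP.2.2 a ha b hb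
  rcases Nat.eq_zero_or_pos k with rfl | hk
  · have hab : a = b := by rw [← hc0, ← hck]
    subst hab
    left; simpa using ha
  rcases hadj 0 hk with ⟨he, -⟩ | ⟨he, -⟩
  · left
    have hres := straight_lemma P k c hmem hadj hturn (fun _ => he)
    rwa [hc0, hck] at hres
  · right
    set Q := P.image Prod.swap with hQ
    set d : ℕ → ℤ × ℤ := fun i => ((c i).2, (c i).1) with hd
    have hmem' : ∀ i ≤ k, d i ∈ Q := fun i hi => Finset.mem_image.mpr ⟨c i, hmem i hi, rfl⟩
    have hadj' : ∀ i < k, CellAdj (d i) (d (i + 1)) := fun i hi => (hadj i hi).symm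
    have hturn' : ((Finset.Ioo 0 k).filter (fun i =>
        (d (i - 1)).1 ≠ (d (i + 1)).1 ∧ (d (i - 1)).2 ≠ (d (i + 1)).2)).card ≤ 1 := by
      have hcongr : ∀ i ∈ Finset.Ioo 0 k,
          ((d (i-1)).1 ≠ (d (i+1)).1 ∧ (d (i-1)).2 ≠ (d (i+1)).2) ↔
          ((c (i-1)).1 ≠ (c (i+1)).1 ∧ (c (i-1)).2 ≠ (c (i+1)).2) :=
        fun i _ => ⟨fun hh => ⟨hh.2, hh.1⟩, fun hh => ⟨hh.2, hh.1⟩⟩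
      rwa [Finset.filter_congr hcongr]
    have hres := straight_lemma Q k d hmem' hadj' hturn' (fun _ => he)
    obtain ⟨x, hx, hxe⟩ := Finset.mem_image.mp hres
    have hxv : x = ((c k).1, (c 0).2) := by
      have := congrArg Prod.swap hxe
      simpa using this
    rw [← hc0, ← hck]
    exact hxv ▸ hx

/-- Let `P` be an L-convex polyomino and `P*` the Ferrer diagram obtained by
sorting the row lengths and column lengths of `P` decreasingly. Then for every `k`
the numbers of placements of `k` non-attacking rooks on `P` and on `P*` agree, and
in particular the maximal numbers of non-attacking rooks coincide. -/
theorem stmt10 (P : Finset (ℤ × ℤ)) (hP : IsLConvex P) (n : ℕ) (h : ℕ → ℕ)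
    (hdec : ∀ i j : ℕ, i ≤ j → j < n → h j ≤ h i) (hpos : ∀ i, i < n → 0 < h i)
    (hrows : rowMultiset (ferrerCellsZ n h) = rowMultiset P)
    (hcols : colMultiset (ferrerCellsZ n h) = colMultiset P) :
    (∀ k, (rookPlacements P k).card = (rookPlacements (ferrerCellsZ n h) k).card) ∧
    {k | (rookPlacements P k).Nonempty} =
      {k | (rookPlacements (ferrerCellsZ n h) k).Nonempty} := by
  have hNP : NestedR P := nested_of_crossing (crossing_of_LConvex P hP)
  have hNF : NestedR (ferrerCellsZ n h) := nested_of_crossing (crossing_ferrer hdec)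
  have hmain : ∀ k, (rookPlacements P k).card = (rookPlacements (ferrerCellsZ n h) k).card :=
    fun k => (count_eq ((ferrerCellsZ n h).image Prod.fst).card (ferrerCellsZ n h) P
      hNF hNP le_rfl hrows k).symm
  refine ⟨hmain, ?_⟩
  ext k
  simp only [Set.mem_setOf_eq]
  rw [← Finset.card_pos, ← Finset.card_pos, hmain k]
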